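/- Strong duality for the elastic steepest descent problem: let H be a real inner product space, I a finite nonempty index set, g : I → H, and σ : I → ℝ with σ_i > 0 for all i. If λ* minimizes ‖Σ_{i∈I} λ_i g_i‖² over the dual feasible set and u = Σ_{i∈I} λ*_i g_i, then the pair (d, α) = (−u, −‖u‖²) is feasible for the elastic steepest descent problem and minimizes α + (1/2)‖d‖² over all feasible pairs, with optimal value −(1/2)‖u‖². -/

import Mathlib

open RealInnerProductSpace

/-- strong duality: if `λ*` minimizes the dual objective and
`u = Σ λ* i • g i`, then `(d, α) = (-u, -‖u‖²)` is feasible for the elastic steepest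
descent problem, minimizes `α + (1/2)‖d‖²` over all feasible pairs, and the optimal
value is `-(1/2)‖u‖²`. -/
theorem stmt_6 {H : Type*} [NormedAddCommGroup H] [InnerProductSpace ℝ H]
    {I : Type*} [Fintype I] [Nonempty I]
    (g : I → H) (σ : I → ℝ) (hσ : ∀ i, 0 < σ i)
    (lamstar : I → ℝ) (hstar_nonneg : ∀ i, 0 ≤ lamstar i)
    (hstar_sum : ∑ i, lamstar i * σ i = 1)
    (hstar_min : ∀ lam : I → ℝ, (∀ i, 0 ≤ lam i) → ∑ i, lam i * σ i = 1 →
      ‖∑ i, lamstar i • g i‖ ^ 2 ≤ ‖∑ i, lam i • g i‖ ^ 2)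
    (u : H) (hu : u = ∑ i, lamstar i • g i) :
    (∀ i, ⟪g i, -u⟫ ≤ σ i * (-‖u‖ ^ 2)) ∧
    (∀ (d : H) (α : ℝ), (∀ i, ⟪g i, d⟫ ≤ σ i * α) →
      (-‖u‖ ^ 2) + (1 / 2) * ‖-u‖ ^ 2 ≤ α + (1 / 2) * ‖d‖ ^ 2) ∧
    (-‖u‖ ^ 2) + (1 / 2) * ‖-u‖ ^ 2 = -((1 / 2) * ‖u‖ ^ 2) := by
  classical
  refine ⟨?_, ?_, by rw [norm_neg]; ring⟩
  · intro i
    set v : H := (σ i)⁻¹ • g i with hv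
    set w : H := v - u with hw
    -- key variational inequality : 0 ≤ ⟪u, w⟫
    have key : 0 ≤ ⟪u, w⟫ := by
      have step : ∀ t : ℝ, 0 < t → t ≤ 1 → 0 ≤ 2 * ⟪u, w⟫ + t * ‖w‖ ^ 2 := by
        intro t ht ht1
        set lam : I → ℝ := fun j => (1 - t) * lamstar j + t * (if j = i then (σ i)⁻¹ else 0)
          with hlam
        have hnn : ∀ j, 0 ≤ lam j := by
          intro j
          have : (0:ℝ) ≤ if j = i then (σ i)⁻¹ else 0 := by
            split <;> [exact (inv_pos.mpr (hσ i)).le; exact le_rfl]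
          have h1 : 0 ≤ (1 - t) * lamstar j := mul_nonneg (by linarith) (hstar_nonneg j)
          have h2 : 0 ≤ t * (if j = i then (σ i)⁻¹ else 0) := mul_nonneg ht.le this
          simp only [hlam]
          linarith
        have hsum : ∑ j, lam j * σ j = 1 := by
          have : ∑ j, lam j * σ j =
              (1 - t) * (∑ j, lamstar j * σ j) +
              t * (∑ j, (if j = i then (σ i)⁻¹ else 0) * σ j) := by
            rw [Finset.mul_sum, Finset.mul_sum, ← Finset.sum_add_distrib]
            apply Finset.sum_congr rfl
            intro j _; by_cases hji : j = i <;> simp [hlam, hji] <;> ring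
          rw [this, hstar_sum]
          rw [Finset.sum_eq_single i]
          · rw [if_pos rfl, inv_mul_cancel₀ (hσ i).ne', mul_one]; ring
          · intro b _ hb; simp [hb]
          · simp
        have hvec : ∑ j, lam j • g j = u + t • w := by
          have : ∑ j, lam j • g j =
              (1 - t) • (∑ j, lamstar j • g j) +
              t • (∑ j, (if j = i then (σ i)⁻¹ else 0) • g j) := by
            rw [Finset.smul_sum, Finset.smul_sum, ← Finset.sum_add_distrib]
            apply Finset.sum_congr rfl
            intro j _
            simp only [hlam, ← smul_assoc, smul_eq_mul, ← add_smul]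
          rw [this, ← hu, Finset.sum_eq_single i]
          · simp only [if_pos rfl, ← hv, hw]
            rw [sub_smul, one_smul, smul_sub]
            abel
          · intro b _ hb; simp [hb]
          · simp
        have hmin := hstar_min lam hnn hsum
        rw [hvec, ← hu] at hmin
        have hexp : ‖u + t • w‖ ^ 2 = ‖u‖ ^ 2 + 2 * (t * ⟪u, w⟫) + t ^ 2 * ‖w‖ ^ 2 := by
          rw [← real_inner_self_eq_norm_sq, ← real_inner_self_eq_norm_sq,
            ← real_inner_self_eq_norm_sq]
          simp only [inner_add_add_self, real_inner_smul_left, real_inner_smul_right]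
          rw [real_inner_comm w u]
          ring
        rw [hexp] at hmin
        nlinarith
      by_contra hneg
      push_neg at hneg
      rcases eq_or_lt_of_le (sq_nonneg ‖w‖) with hz | hz
      · have := step 1 one_pos le_rfl
        nlinarith
      · set t := min 1 (-⟪u, w⟫ / ‖w‖ ^ 2) with htd
        have ht0 : 0 < t := lt_min one_pos (div_pos (by linarith) hz)
        have := step t ht0 (min_le_left _ _)
        have htle : t * ‖w‖ ^ 2 ≤ -⟪u, w⟫ := by
          have : t ≤ -⟪u, w⟫ / ‖w‖ ^ 2 := min_le_right _ _
          calc t * ‖w‖ ^ 2 ≤ (-⟪u, w⟫ / ‖w‖ ^ 2) * ‖w‖ ^ 2 := by nlinarith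
            _ = -⟪u, w⟫ := by rw [div_mul_cancel₀ _ hz.ne']
        nlinarith
    -- deduce feasibility
    have hiv : ⟪u, v⟫ = (σ i)⁻¹ * ⟪u, g i⟫ := real_inner_smul_right u (g i) _
    have huu : ⟪u, u⟫ = ‖u‖ ^ 2 := real_inner_self_eq_norm_sq u
    have hk : σ i * ‖u‖ ^ 2 ≤ ⟪u, g i⟫ := by
      rw [hw, inner_sub_right, hiv, huu] at key
      have h3 := mul_le_mul_of_nonneg_left key (hσ i).le
      have hc : σ i * (σ i)⁻¹ = 1 := mul_inv_cancel₀ (hσ i).ne'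
      rw [mul_zero, mul_sub, ← mul_assoc, hc, one_mul] at h3
      linarith
    rw [inner_neg_right, real_inner_comm]
    linarith
  · intro d α hfeas
    have h1 : ⟪u, d⟫ ≤ α := by
      have : ∑ i, lamstar i * ⟪g i, d⟫ ≤ ∑ i, lamstar i * (σ i * α) :=
        Finset.sum_le_sum fun i _ =>
          mul_le_mul_of_nonneg_left (hfeas i) (hstar_nonneg i)
      have hl : ⟪u, d⟫ = ∑ i, lamstar i * ⟪g i, d⟫ := by
        rw [hu, sum_inner]
        exact Finset.sum_congr rfl fun i _ => real_inner_smul_left _ _ _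
      have hr : ∑ i, lamstar i * (σ i * α) = α := by
        have : ∑ i, lamstar i * (σ i * α) = (∑ i, lamstar i * σ i) * α := by
          rw [Finset.sum_mul]; exact Finset.sum_congr rfl fun i _ => by ring
        rw [this, hstar_sum, one_mul]
      rw [hl]; rw [hr] at this; exact this
    have h2 : 0 ≤ ‖u + d‖ ^ 2 := sq_nonneg _
    have hexp : ‖u + d‖ ^ 2 = ‖u‖ ^ 2 + 2 * ⟪u, d⟫ + ‖d‖ ^ 2 := by
      rw [← real_inner_self_eq_norm_sq, ← real_inner_self_eq_norm_sq,
        ← real_inner_self_eq_norm_sq, inner_add_add_self]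
      rw [real_inner_comm d u]
      ring
    rw [norm_neg]
    nlinarith
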